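/- Let ρ > 0 and let w : (0,∞) → ℝ be antitone with 0 < w(x) ≤ 1 for all x, such that x ↦ w(x) e^{-ρx}(ρx−2)x/(1+x) is integrable. Then ∫₀^∞ w(x) · (e^{-ρx}/(1+x)) (ρx − 2) x dx < 0. -/

import Mathlib

open MeasureTheory Real Set Filter

lemma aux_tendsto (b c d : ℝ) (hb : 0 < b) :
    Tendsto (fun x : ℝ => Real.exp (-b*x) * (c*x + d)) atTop (nhds 0) := by
  have h1 : Tendsto (fun x : ℝ => x * Real.exp (-b*x)) atTop (nhds 0) := by
    have := tendsto_rpow_mul_exp_neg_mul_atTop_nhds_zero 1 b hb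
    refine this.congr (fun x => by rw [Real.rpow_one])
  have h2 : Tendsto (fun x : ℝ => Real.exp (-b*x)) atTop (nhds 0) :=
    Real.tendsto_exp_atBot.comp (tendsto_id.const_mul_atTop_of_neg (by linarith))
  have := (h1.const_mul c).add (h2.const_mul d)
  simp only [mul_zero, add_zero] at this
  exact this.congr (fun x => by ring)

lemma aux_int_g1 (ρ : ℝ) (hρ : 0 < ρ) :
    IntegrableOn (fun x : ℝ => Real.exp (-ρ*x) * (ρ*x - ρ - 2)) (Ioi 0) := by
  apply integrable_of_isBigO_exp_neg (half_pos hρ)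
  · fun_prop
  · have h := aux_tendsto (ρ/2) ρ (-ρ-2) (half_pos hρ)
    apply Asymptotics.IsLittleO.isBigO
    apply Asymptotics.isLittleO_of_tendsto (fun x hx => absurd hx (Real.exp_ne_zero _))
    apply h.congr (fun x => ?_)
    rw [eq_div_iff (Real.exp_ne_zero _), mul_comm (Real.exp (-(ρ/2)*x)), mul_assoc,
      mul_comm _ (Real.exp _), ← Real.exp_add]
    ring_nf

lemma aux_int_E (ρ : ℝ) (hρ : 0 < ρ) :
    IntegrableOn (fun x : ℝ => Real.exp (-ρ*x) / (1+x)) (Ioi 0) := by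
  apply Integrable.mono' (exp_neg_integrableOn_Ioi 0 hρ)
  · apply ContinuousOn.aestronglyMeasurable ?_ measurableSet_Ioi
    apply ContinuousOn.div (by fun_prop) (by fun_prop)
    intro x hx; simp only [mem_Ioi] at hx; intro h; linarith
  · rw [ae_restrict_iff' measurableSet_Ioi]
    filter_upwards with x hx
    simp only [mem_Ioi] at hx
    rw [Real.norm_eq_abs, abs_div, abs_of_nonneg (Real.exp_pos _).le, abs_of_nonneg (by linarith : (0:ℝ) ≤ 1+x)]
    rw [div_le_iff₀ (by linarith)]
    nlinarith [Real.exp_pos (-ρ*x)]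

lemma aux_int_F (ρ : ℝ) (hρ : 0 < ρ) :
    IntegrableOn (fun x : ℝ => Real.exp (-ρ*x) / (1+x)^2) (Ioi 0) := by
  apply Integrable.mono' (exp_neg_integrableOn_Ioi 0 hρ)
  · apply ContinuousOn.aestronglyMeasurable ?_ measurableSet_Ioi
    apply ContinuousOn.div (by fun_prop) (by fun_prop)
    intro x hx; simp only [mem_Ioi] at hx; positivity
  · rw [ae_restrict_iff' measurableSet_Ioi]
    filter_upwards with x hx
    simp only [mem_Ioi] at hx
    rw [Real.norm_eq_abs, abs_div, abs_of_nonneg (Real.exp_pos _).le, abs_of_nonneg (by positivity : (0:ℝ) ≤ (1+x)^2)]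
    rw [div_le_iff₀ (by positivity)]
    nlinarith [mul_pos (Real.exp_pos (-ρ*x)) (show (0:ℝ) < x^2 + 2*x by nlinarith)]

lemma aux_val_exp (ρ : ℝ) (hρ : 0 < ρ) :
    ∫ x in Ioi (0:ℝ), Real.exp (-ρ*x) = 1/ρ := by
  have hderiv : ∀ x ∈ Ici (0:ℝ), HasDerivAt (fun y => -Real.exp (-ρ*y)/ρ) (Real.exp (-ρ*x)) x := by
    intro x _
    have : HasDerivAt (fun y : ℝ => -ρ*y) (-ρ) x := by
      simpa using (hasDerivAt_id x).const_mul (-ρ)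
    have h2 := (this.exp.neg.div_const ρ)
    refine h2.congr_deriv ?_
    field_simp
  have htend : Tendsto (fun y => -Real.exp (-ρ*y)/ρ) atTop (nhds 0) := by
    have h := aux_tendsto ρ 0 (-(1/ρ)) hρ
    apply h.congr (fun x => by field_simp; ring)
  rw [integral_Ioi_of_hasDerivAt_of_tendsto' hderiv (exp_neg_integrableOn_Ioi 0 hρ) htend]
  simp [Real.exp_zero]
  field_simp

lemma aux_val_g1 (ρ : ℝ) (hρ : 0 < ρ) :
    ∫ x in Ioi (0:ℝ), Real.exp (-ρ*x) * (ρ*x - ρ - 2) = -(ρ+1)/ρ := by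
  have hderiv : ∀ x ∈ Ici (0:ℝ), HasDerivAt (fun y => Real.exp (-ρ*y) * (-y + (ρ+1)/ρ))
      (Real.exp (-ρ*x) * (ρ*x - ρ - 2)) x := by
    intro x _
    have h1 : HasDerivAt (fun y : ℝ => Real.exp (-ρ*y)) (Real.exp (-ρ*x) * (-ρ)) x := by
      simpa using ((hasDerivAt_id x).const_mul (-ρ)).exp
    have h2 : HasDerivAt (fun y : ℝ => -y + (ρ+1)/ρ) (-1) x := by
      simpa using ((hasDerivAt_id x).neg.add_const ((ρ+1)/ρ))
    have := h1.mul h2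
    refine this.congr_deriv ?_
    field_simp
    ring
  have htend : Tendsto (fun y => Real.exp (-ρ*y) * (-y + (ρ+1)/ρ)) atTop (nhds 0) :=
    aux_tendsto ρ (-1) ((ρ+1)/ρ) hρ |>.congr (fun x => by ring_nf)
  rw [integral_Ioi_of_hasDerivAt_of_tendsto' hderiv (aux_int_g1 ρ hρ) htend]
  simp [Real.exp_zero]
  field_simp
  ring

lemma aux_ibp (ρ : ℝ) (hρ : 0 < ρ) :
    ρ * (∫ x in Ioi (0:ℝ), Real.exp (-ρ*x) / (1+x)) +
      (∫ x in Ioi (0:ℝ), Real.exp (-ρ*x) / (1+x)^2) = 1 := by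
  have hint : IntegrableOn (fun x : ℝ =>
      ρ * (Real.exp (-ρ*x) / (1+x)) + Real.exp (-ρ*x) / (1+x)^2) (Ioi 0) :=
    ((aux_int_E ρ hρ).const_mul ρ).add (aux_int_F ρ hρ)
  have hderiv : ∀ x ∈ Ici (0:ℝ), HasDerivAt (fun y => -Real.exp (-ρ*y)/(1+y))
      (ρ * (Real.exp (-ρ*x) / (1+x)) + Real.exp (-ρ*x) / (1+x)^2) x := by
    intro x hx
    simp only [mem_Ici] at hx
    have hne : (1:ℝ) + x ≠ 0 := by linarith
    have h0 : HasDerivAt (fun y : ℝ => Real.exp (-ρ*y)) (Real.exp (-ρ*x) * (-ρ)) x := by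
      simpa using ((hasDerivAt_id x).const_mul (-ρ)).exp
    have h1 : HasDerivAt (fun y : ℝ => -Real.exp (-ρ*y)) (Real.exp (-ρ*x) * ρ) x := by
      have := h0.neg
      exact this.congr_deriv (by ring)
    have h2 : HasDerivAt (fun y : ℝ => 1+y) 1 x := by
      simpa using (hasDerivAt_id x).const_add 1
    have := h1.div h2 hne
    refine this.congr_deriv ?_
    field_simp
    ring
  have htend : Tendsto (fun y => -Real.exp (-ρ*y)/(1+y)) atTop (nhds 0) := by
    have h1 : Tendsto (fun y : ℝ => Real.exp (-ρ*y)) atTop (nhds 0) :=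
      (aux_tendsto ρ 0 1 hρ).congr (fun x => by ring_nf)
    have h2 : Tendsto (fun y : ℝ => 1+y) atTop atTop := tendsto_atTop_add_const_left _ 1 tendsto_id
    have := (h1.neg).div_atTop h2
    simpa using this
  have hval := integral_Ioi_of_hasDerivAt_of_tendsto' hderiv hint htend
  rw [integral_add ((aux_int_E ρ hρ).const_mul ρ) (aux_int_F ρ hρ),
    MeasureTheory.integral_const_mul] at hval
  rw [hval]
  norm_num

lemma aux_E_lt (ρ : ℝ) (hρ : 0 < ρ) :
    (∫ x in Ioi (0:ℝ), Real.exp (-ρ*x) / (1+x)) < (ρ+1)/(ρ*(ρ+2)) := by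
  set E := ∫ x in Ioi (0:ℝ), Real.exp (-ρ*x) / (1+x) with hE
  set F := ∫ x in Ioi (0:ℝ), Real.exp (-ρ*x) / (1+x)^2 with hF
  have hE0 : 0 ≤ E := by
    apply setIntegral_nonneg measurableSet_Ioi
    intro x hx
    simp only [mem_Ioi] at hx
    positivity
  -- Cauchy-Schwarz: F ≥ ρ E^2
  have hCS : ρ * E^2 ≤ F := by
    have key : 0 ≤ ∫ x in Ioi (0:ℝ),
        (ρ^2*E^2 * Real.exp (-ρ*x) - 2*ρ*E*(Real.exp (-ρ*x)/(1+x)) + Real.exp (-ρ*x)/(1+x)^2) := by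
      apply setIntegral_nonneg measurableSet_Ioi
      intro x hx
      simp only [mem_Ioi] at hx
      have hexp : Real.exp (-(ρ/2)*x) * Real.exp (-(ρ/2)*x) = Real.exp (-ρ*x) := by
        rw [← Real.exp_add]; ring_nf
      have hne : (1:ℝ) + x ≠ 0 := by linarith
      have : ρ^2*E^2 * Real.exp (-ρ*x) - 2*ρ*E*(Real.exp (-ρ*x)/(1+x)) + Real.exp (-ρ*x)/(1+x)^2
          = (ρ*E*Real.exp (-(ρ/2)*x) - Real.exp (-(ρ/2)*x)/(1+x))^2 := by
        rw [← hexp]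
        field_simp
        ring
      rw [this]
      positivity
    have hi1 : IntegrableOn (fun x : ℝ => ρ^2*E^2 * Real.exp (-ρ*x)) (Ioi 0) :=
      (exp_neg_integrableOn_Ioi 0 hρ).const_mul _
    have hi2 : IntegrableOn (fun x : ℝ => 2*ρ*E*(Real.exp (-ρ*x)/(1+x))) (Ioi 0) :=
      (aux_int_E ρ hρ).const_mul _
    have hi12 : IntegrableOn (fun x : ℝ =>
        ρ^2*E^2 * Real.exp (-ρ*x) - 2*ρ*E*(Real.exp (-ρ*x)/(1+x))) (Ioi 0) := hi1.sub hi2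
    rw [integral_add hi12 (aux_int_F ρ hρ), integral_sub hi1 hi2,
      MeasureTheory.integral_const_mul, MeasureTheory.integral_const_mul, aux_val_exp ρ hρ] at key
    rw [← hE, ← hF] at key
    have : ρ^2*E^2 * (1/ρ) = ρ*E^2 := by field_simp
    nlinarith [key]
  have hibp := aux_ibp ρ hρ
  rw [← hE, ← hF] at hibp
  -- now ρ E^2 + ρ E ≤ 1, conclude
  rw [div_eq_mul_inv]
  rw [← sub_pos]
  have h1 : ρ * E^2 + ρ * E ≤ 1 := by linarith
  have hd : (0:ℝ) < ρ*(ρ+2) := by positivity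
  rw [show (ρ+1) * (ρ*(ρ+2))⁻¹ - E = ((ρ+1) - E*(ρ*(ρ+2))) * (ρ*(ρ+2))⁻¹ by field_simp]
  apply mul_pos _ (inv_pos.mpr hd)
  nlinarith [sq_nonneg (ρ*(ρ+2)*E - (ρ+1)), mul_pos hρ (mul_pos hρ hρ)]

theorem stmt_9 (ρ : ℝ) (hρ : 0 < ρ) (w : ℝ → ℝ)
    (hw : AntitoneOn w (Set.Ioi 0))
    (hwpos : ∀ x ∈ Set.Ioi (0 : ℝ), 0 < w x)
    (hwle : ∀ x ∈ Set.Ioi (0 : ℝ), w x ≤ 1)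
    (hint : IntegrableOn
      (fun x => w x * (Real.exp (-ρ * x) * (ρ * x - 2) * x / (1 + x))) (Set.Ioi 0)) :
    ∫ x in Set.Ioi (0 : ℝ), w x * (Real.exp (-ρ * x) / (1 + x) * (ρ * x - 2) * x) < 0 := by
  set f : ℝ → ℝ := fun x => Real.exp (-ρ * x) / (1 + x) * (ρ * x - 2) * x with hf
  have hc : (0:ℝ) < 2/ρ := by positivity
  have heq : EqOn (fun x : ℝ => Real.exp (-ρ*x) * (ρ*x - ρ - 2) + (ρ+2) * (Real.exp (-ρ*x)/(1+x)))
      f (Ioi 0) := by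
    intro x hx
    simp only [mem_Ioi] at hx
    have hne : (1:ℝ) + x ≠ 0 := by linarith
    simp only [hf]
    field_simp
    ring
  -- integrability of f on Ioi 0
  have hg_int : IntegrableOn (fun x : ℝ =>
      Real.exp (-ρ*x) * (ρ*x - ρ - 2) + (ρ+2) * (Real.exp (-ρ*x)/(1+x))) (Ioi 0) :=
    (aux_int_g1 ρ hρ).add ((aux_int_E ρ hρ).const_mul _)
  have hf_int : IntegrableOn f (Ioi 0) := hg_int.congr_fun heq measurableSet_Ioi
  -- value of ∫ f
  have hf_val : ∫ x in Ioi (0:ℝ), f x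
      = -(ρ+1)/ρ + (ρ+2) * (∫ x in Ioi (0:ℝ), Real.exp (-ρ*x)/(1+x)) := by
    rw [← setIntegral_congr_fun measurableSet_Ioi heq,
      integral_add (aux_int_g1 ρ hρ) ((aux_int_E ρ hρ).const_mul _),
      MeasureTheory.integral_const_mul, aux_val_g1 ρ hρ]
  have hf_neg : (∫ x in Ioi (0:ℝ), f x) < 0 := by
    rw [hf_val]
    have hlt := aux_E_lt ρ hρ
    have h2 : (0:ℝ) < ρ + 2 := by linarith
    have : (ρ+2) * (∫ x in Ioi (0:ℝ), Real.exp (-ρ*x)/(1+x)) < (ρ+2) * ((ρ+1)/(ρ*(ρ+2))) :=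
      mul_lt_mul_of_pos_left hlt h2
    have hval : (ρ+2) * ((ρ+1)/(ρ*(ρ+2))) = (ρ+1)/ρ := by field_simp
    rw [hval] at this
    rw [neg_div]
    linarith
  -- pointwise comparison with w (2/ρ)
  have hpt : ∀ x ∈ Ioi (0:ℝ), w x * f x ≤ w (2/ρ) * f x := by
    intro x hx
    simp only [mem_Ioi] at hx
    have hne : (0:ℝ) < 1 + x := by linarith
    rcases le_or_gt x (2/ρ) with h | h
    · have hfx : f x ≤ 0 := by
        simp only [hf]
        have h1 : ρ * x - 2 ≤ 0 := by
          rw [sub_nonpos]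
          calc ρ * x ≤ ρ * (2/ρ) := by nlinarith
            _ = 2 := by field_simp
        have h2 : 0 ≤ Real.exp (-ρ*x) / (1+x) := by positivity
        have := mul_nonpos_of_nonpos_of_nonneg (mul_nonpos_of_nonneg_of_nonpos h2 h1) hx.le
        exact this
      have hwge : w (2/ρ) ≤ w x := hw (mem_Ioi.mpr hx) (mem_Ioi.mpr hc) h
      exact mul_le_mul_of_nonpos_right hwge hfx
    · have hfx : 0 ≤ f x := by
        simp only [hf]
        have h1 : 0 ≤ ρ * x - 2 := by
          rw [sub_nonneg]
          calc (2:ℝ) = ρ * (2/ρ) := by field_simp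
            _ ≤ ρ * x := by nlinarith
        positivity
      have hwle' : w x ≤ w (2/ρ) := hw (mem_Ioi.mpr hc) (mem_Ioi.mpr hx) h.le
      exact mul_le_mul_of_nonneg_right hwle' hfx
  -- integrability of w * f
  have hint' : IntegrableOn (fun x => w x * f x) (Ioi 0) := by
    have : (fun x => w x * (Real.exp (-ρ * x) * (ρ * x - 2) * x / (1 + x)))
        = fun x => w x * f x := by
      funext x; simp only [hf]; ring
    rw [← this]
    exact hint
  have hmono := setIntegral_mono_on hint' (hf_int.const_mul (w (2/ρ))) measurableSet_Ioi hpt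
  rw [MeasureTheory.integral_const_mul] at hmono
  calc ∫ x in Ioi (0:ℝ), w x * f x ≤ w (2/ρ) * ∫ x in Ioi (0:ℝ), f x := hmono
    _ < 0 := mul_neg_of_pos_of_neg (hwpos _ (mem_Ioi.mpr hc)) hf_neg
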